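/- Let G be a k-regular simple graph with chromatic number χ. Then the smallest adjacency eigenvalue λ of G satisfies λ ≤ -k/(χ - 1). -/

import Mathlib

open Matrix

/-- The smallest eigenvalue of a real symmetric matrix. -/
noncomputable def minEig {n : Type*} [Fintype n] [DecidableEq n] (hn : Nonempty n)
    {A : Matrix n n ℝ} (hA : A.IsHermitian) : ℝ :=
  Finset.univ.inf' (Finset.univ_nonempty_iff.mpr hn) hA.eigenvalues

/-- The adjacency matrix of a graph is Hermitian. -/
lemma adjHerm {V : Type*} [Fintype V] (G : SimpleGraph V) [DecidableRel G.Adj] :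
    (G.adjMatrix ℝ).IsHermitian := by
  ext i j
  simp [Matrix.conjTranspose_apply, SimpleGraph.adj_comm]

lemma minEig_psd {n : Type*} [Fintype n] [DecidableEq n] (hn : Nonempty n)
    {A : Matrix n n ℝ} (hA : A.IsHermitian) :
    (A - minEig hn hA • (1 : Matrix n n ℝ)).PosSemidef := by
  have hU : (hA.eigenvectorUnitary : Matrix n n ℝ) * star (hA.eigenvectorUnitary : Matrix n n ℝ)
      = 1 := Matrix.mem_unitaryGroup_iff.mp hA.eigenvectorUnitary.2
  have h1 : minEig hn hA • (1 : Matrix n n ℝ)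
      = (hA.eigenvectorUnitary : Matrix n n ℝ) * (minEig hn hA • (1 : Matrix n n ℝ))
        * star (hA.eigenvectorUnitary : Matrix n n ℝ) := by
    rw [Matrix.mul_smul, Matrix.smul_mul, mul_one, hU]
  have hdiag : Matrix.diagonal (fun i => hA.eigenvalues i - minEig hn hA)
      = Matrix.diagonal (RCLike.ofReal ∘ hA.eigenvalues) - minEig hn hA • (1 : Matrix n n ℝ) := by
    ext i j
    by_cases h : i = j <;> simp [Matrix.diagonal, Matrix.one_apply, h]
  have hdecomp : A - minEig hn hA • (1 : Matrix n n ℝ)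
      = (hA.eigenvectorUnitary : Matrix n n ℝ)
        * Matrix.diagonal (fun i => hA.eigenvalues i - minEig hn hA)
        * star (hA.eigenvectorUnitary : Matrix n n ℝ) := by
    rw [hdiag, Matrix.mul_sub, Matrix.sub_mul, ← h1, ← Unitary.conjStarAlgAut_apply (S := ℝ), ← hA.spectral_theorem]
  rw [hdecomp]
  have hd : (Matrix.diagonal (fun i => hA.eigenvalues i - minEig hn hA)).PosSemidef := by
    refine Matrix.posSemidef_diagonal_iff.mpr fun i => ?_
    have : minEig hn hA ≤ hA.eigenvalues i := Finset.inf'_le _ (Finset.mem_univ i)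
    linarith
  simpa [Matrix.star_eq_conjTranspose] using hd.mul_mul_conjTranspose_same (hA.eigenvectorUnitary : Matrix n n ℝ)

lemma rayleigh_min {n : Type*} [Fintype n] [DecidableEq n] (hn : Nonempty n)
    {A : Matrix n n ℝ} (hA : A.IsHermitian) (x : n → ℝ) :
    minEig hn hA * (x ⬝ᵥ x) ≤ x ⬝ᵥ (A *ᵥ x) := by
  have h := (minEig_psd hn hA).re_dotProduct_nonneg x
  simp only [RCLike.re_to_real, star_trivial] at h
  rw [Matrix.sub_mulVec, dotProduct_sub, Matrix.smul_mulVec,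
    Matrix.one_mulVec, dotProduct_smul] at h
  simp only [smul_eq_mul] at h
  linarith

/-- If `G` is a connected `k`-regular simple graph with at least one edge and
chromatic number `χ`, then its smallest adjacency eigenvalue `λ` satisfies
`λ ≤ -k/(χ - 1)`. -/
theorem stmt16 {V : Type*} [Fintype V] [DecidableEq V] (hV : Nonempty V)
    (G : SimpleGraph V) [DecidableRel G.Adj] (k : ℕ) (hreg : G.IsRegularOfDegree k)
    (hconn : G.Connected) (hedge : ∃ u v : V, G.Adj u v)
    (χ : ℕ) (hχ : G.chromaticNumber = χ) :
    minEig hV (adjHerm G) ≤ -(k : ℝ) / ((χ : ℝ) - 1) := by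
  classical
  have hcol : G.Colorable χ := by
    rw [← SimpleGraph.chromaticNumber_le_iff_colorable, hχ]
  obtain ⟨C⟩ := hcol
  obtain ⟨u, v, huv⟩ := hedge
  have hχ2 : 2 ≤ χ := by
    by_contra h
    push_neg at h
    interval_cases χ
    · exact (C u).elim0
    · exact C.valid huv (Subsingleton.elim _ _)
  set A := G.adjMatrix ℝ with hAdef
  set μ := minEig hV (adjHerm G) with hμ
  set c : ℝ := (χ : ℝ) with hc
  have hc2 : (2 : ℝ) ≤ c := by rw [hc]; exact_mod_cast hχ2
  set x : Fin χ → V → ℝ := fun i w => if C w = i then c - 1 else -1 with hx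
  have key : ∀ v w : V, (∑ i : Fin χ, x i v * x i w)
      = c ^ 2 * (if C v = C w then (1 : ℝ) else 0) - c := by
    intro v w
    have hxv : ∀ (z : V) (i : Fin χ), x i z = c * (if C z = i then (1:ℝ) else 0) - 1 := by
      intro z i; by_cases h : C z = i <;> simp [hx, h]
    have h1 : ∀ z : V, (∑ i : Fin χ, (if C z = i then (1:ℝ) else 0)) = 1 := by
      intro z; simp
    have hprod : ∀ i : Fin χ, (if C v = i then (1:ℝ) else 0) * (if C w = i then (1:ℝ) else 0)
        = if C v = i ∧ C w = i then (1:ℝ) else 0 := by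
      intro i
      by_cases h1 : C v = i <;> by_cases h2 : C w = i <;> simp [h1, h2]
    have h2 : (∑ i : Fin χ, (if C v = i then (1:ℝ) else 0) * (if C w = i then (1:ℝ) else 0))
        = if C v = C w then (1:ℝ) else 0 := by
      simp_rw [hprod]
      rcases eq_or_ne (C v) (C w) with h | h
      · simp [h, and_self, Finset.sum_ite_eq]
      · rw [if_neg h]
        apply Finset.sum_eq_zero
        intro i _
        rw [if_neg]
        rintro ⟨r1, r2⟩
        exact h (r1.trans r2.symm)
    calc (∑ i : Fin χ, x i v * x i w)
        = ∑ i : Fin χ, (c^2 * ((if C v = i then (1:ℝ) else 0) * (if C w = i then (1:ℝ) else 0))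
            - c * (if C v = i then (1:ℝ) else 0) - c * (if C w = i then (1:ℝ) else 0) + 1) := by
          refine Finset.sum_congr rfl fun i _ => ?_
          rw [hxv v i, hxv w i]; ring
      _ = c^2 * (if C v = C w then (1:ℝ) else 0) - c := by
          simp only [Finset.sum_add_distrib, Finset.sum_sub_distrib, ← Finset.mul_sum, h2,
            h1, Finset.sum_const, Finset.card_univ, Fintype.card_fin, nsmul_eq_mul, mul_one]
          rw [hc]; ring
  have hn : (0 : ℝ) < (Fintype.card V : ℝ) := by
    exact_mod_cast Fintype.card_pos_iff.mpr hV
  set n : ℝ := (Fintype.card V : ℝ) with hndef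
  have hrow : ∀ v : V, (∑ w : V, A v w) = (k : ℝ) := by
    intro v
    have h := SimpleGraph.adjMatrix_mulVec_const_apply (G := G) (α := ℝ) (a := 1) (v := v)
    rw [hreg v] at h
    simpa [Matrix.mulVec, dotProduct, hAdef] using h
  have hS1 : (∑ i : Fin χ, x i ⬝ᵥ (A *ᵥ x i)) = -c * k * n := by
    have hswap : (∑ i : Fin χ, x i ⬝ᵥ (A *ᵥ x i))
        = ∑ v : V, ∑ w : V, A v w * (∑ i : Fin χ, x i v * x i w) := by
      simp only [dotProduct, Matrix.mulVec, Finset.mul_sum, Finset.sum_mul]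
      rw [Finset.sum_comm]
      refine Finset.sum_congr rfl fun v _ => ?_
      rw [Finset.sum_comm]
      refine Finset.sum_congr rfl fun w _ => ?_
      exact Finset.sum_congr rfl fun i _ => by ring
    rw [hswap]
    have hterm : ∀ v w : V, A v w * (∑ i : Fin χ, x i v * x i w) = A v w * (-c) := by
      intro v w
      by_cases h : G.Adj v w
      · have hne : C v ≠ C w := C.valid h
        rw [key]
        simp [hne]
      · simp [hAdef, h]
    simp only [hterm]
    calc (∑ v : V, ∑ w : V, A v w * (-c)) = ∑ v : V, (∑ w : V, A v w) * (-c) := by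
          simp [Finset.sum_mul]
      _ = ∑ v : V, (k : ℝ) * (-c) := by simp only [hrow]
      _ = -c * k * n := by
          rw [Finset.sum_const, Finset.card_univ, nsmul_eq_mul, hndef]; ring
  have hS2 : (∑ i : Fin χ, x i ⬝ᵥ x i) = n * (c * (c - 1)) := by
    have hswap : (∑ i : Fin χ, x i ⬝ᵥ x i) = ∑ v : V, ∑ i : Fin χ, x i v * x i v := by
      simp only [dotProduct]
      rw [Finset.sum_comm]
    rw [hswap]
    have hpt : ∀ v : V, (∑ i : Fin χ, x i v * x i v) = c * (c - 1) := by
      intro v; rw [key]; simp; ring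
    simp only [hpt, Finset.sum_const, Finset.card_univ, nsmul_eq_mul]
    rw [hndef]
  have hray : μ * (∑ i : Fin χ, x i ⬝ᵥ x i) ≤ ∑ i : Fin χ, x i ⬝ᵥ (A *ᵥ x i) := by
    rw [Finset.mul_sum]
    exact Finset.sum_le_sum fun i _ => rayleigh_min hV (adjHerm G) (x i)
  rw [hS1, hS2] at hray
  have hc1 : (0 : ℝ) < c - 1 := by linarith
  rw [le_div_iff₀ hc1]
  nlinarith [hn, hc2, hray, mul_pos hn (by linarith : (0:ℝ) < c)]
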